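/- arXiv:1009.2347 — 3 statements merged into one kernel-verified Lean document; each statement's English description precedes it below -/
import Mathlib

section
/- Assume the flow setup below and let t* = min(1/(2‖D^{(1)}V‖_{∞,M}), t₀) (with 1/0 := ∞). Then for all t ∈ (0, t*], all x ∈ K₂, and all i ∈ {1,…,n}, the limit D_iY^x(t) := lim_{u→0} (Y^{x+u e_i}(t) − Y^x(t))/u exists in ℝⁿ, and ‖D_iY^x(t)‖ ≤ 2. -/
open MeasureTheory Filter Topology Set

/-- The partial derivative of `g : ℝⁿ → ℝ` in the `i`-th coordinate direction. -/
noncomputable def pderiv' {n : ℕ} (i : Fin n) (g : (Fin n → ℝ) → ℝ) : (Fin n → ℝ) → ℝ :=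
  fun x => fderiv ℝ g x (Pi.single i 1)

/-- The iterated partial derivative `D^β g` associated with a multi-index `β : Fin n → ℕ`. -/
noncomputable def mderiv' {n : ℕ} (β : Fin n → ℕ) (g : (Fin n → ℝ) → ℝ) : (Fin n → ℝ) → ℝ :=
  (List.finRange n).foldr (fun i h => (pderiv' i)^[β i] h) g

section Aux
variable {n : ℕ}

private lemma foldr_single (j : Fin n) (m : ℕ) (g : (Fin n → ℝ) → ℝ) (l : List (Fin n))
    (hl : l.Nodup) :
    l.foldr (fun i h => (pderiv' i)^[(Pi.single j m : Fin n → ℕ) i] h) g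
      = if j ∈ l then (pderiv' j)^[m] g else g := by
  induction l with
  | nil => simp
  | cons a l ih =>
    rcases List.nodup_cons.1 hl with ⟨ha, hl'⟩
    by_cases hj : j = a
    · subst hj
      rw [List.foldr_cons, ih hl', if_neg ha, if_pos List.mem_cons_self]
      simp
    · have h0 : (Pi.single j m : Fin n → ℕ) a = 0 := by
        rw [Pi.single_apply, if_neg (fun h => hj h.symm)]
      rw [List.foldr_cons, ih hl']
      simp only [h0, Function.iterate_zero, id_eq, List.mem_cons]
      simp [hj]

lemma mderiv'_single (j : Fin n) (m : ℕ) (g : (Fin n → ℝ) → ℝ) :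
    mderiv' (Pi.single j m) g = (pderiv' j)^[m] g := by
  rw [mderiv', foldr_single j m g _ (List.nodup_finRange n)]
  simp [List.mem_finRange]

private lemma foldr_pair (a b : Fin n) (hab : a < b) (g : (Fin n → ℝ) → ℝ) (l : List (Fin n))
    (hl : l.Pairwise (· < ·)) :
    l.foldr (fun i h => (pderiv' i)^[(Pi.single a 1 + Pi.single b 1 : Fin n → ℕ) i] h) g
      = if a ∈ l then (if b ∈ l then pderiv' a (pderiv' b g) else pderiv' a g)
        else if b ∈ l then pderiv' b g else g := by
  have hab' : a ≠ b := ne_of_lt hab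
  induction l with
  | nil => simp
  | cons c l ih =>
    have hl' : l.Pairwise (· < ·) := hl.of_cons
    have hrel : ∀ i ∈ l, c < i := fun i hi => List.rel_of_pairwise_cons hl hi
    by_cases hca : a = c
    · have hal : a ∉ l := fun h => lt_irrefl a (hca ▸ hrel a h)
      have hbc : b ≠ c := hca ▸ Ne.symm hab'
      have hβ : (Pi.single a 1 + Pi.single b 1 : Fin n → ℕ) c = 1 := by
        rw [← hca]
        simp [Pi.single_apply, hab']
      rw [List.foldr_cons, ih hl', hβ, if_neg hal]
      by_cases hbl : b ∈ l <;>
        simp [hbl, List.mem_cons, hca, hab', hbc, hca ▸ hal]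
    · by_cases hcb : b = c
      · have hal : a ∉ l := fun h => absurd (hcb ▸ hrel a h) (not_lt.2 (le_of_lt hab))
        have hbl : b ∉ l := fun h => lt_irrefl b (hcb ▸ hrel b h)
        have hβ : (Pi.single a 1 + Pi.single b 1 : Fin n → ℕ) c = 1 := by
          rw [← hcb]
          simp [Pi.single_apply, hab']
        rw [List.foldr_cons, ih hl', hβ, if_neg hal, if_neg hbl]
        simp [List.mem_cons, hca, hcb, hal, hbl]
      · have hβ : (Pi.single a 1 + Pi.single b 1 : Fin n → ℕ) c = 0 := by
          simp [Pi.single_eq_of_ne (Ne.symm hca), Pi.single_eq_of_ne (Ne.symm hcb)]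
        rw [List.foldr_cons, ih hl', hβ]
        simp only [Function.iterate_zero, id_eq, List.mem_cons]
        simp [hca, hcb]

lemma mderiv'_pair {a b : Fin n} (hab : a < b) (g : (Fin n → ℝ) → ℝ) :
    mderiv' (Pi.single a 1 + Pi.single b 1) g = pderiv' a (pderiv' b g) := by
  rw [mderiv', foldr_pair a b hab g _ (List.pairwise_lt_finRange n)]
  simp [List.mem_finRange]

end Aux


section Aux2
variable {n : ℕ}

lemma pi_single_expand (v : Fin n → ℝ) :
    v = ∑ j, v j • (Pi.single j 1 : Fin n → ℝ) := by
  funext m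
  rw [Finset.sum_apply]
  simp [Pi.single_apply, mul_ite, Finset.sum_ite_eq]

lemma clm_abs_le (L : (Fin n → ℝ) →L[ℝ] ℝ) (v : Fin n → ℝ) :
    |L v| ≤ (∑ j, |L (Pi.single j 1)|) * ‖v‖ := by
  have h1 : L v = ∑ j, v j * L (Pi.single j 1) := by
    conv_lhs => rw [pi_single_expand v]
    rw [map_sum]
    simp [smul_eq_mul]
  rw [h1]
  calc |∑ j, v j * L (Pi.single j 1)| ≤ ∑ j, |v j * L (Pi.single j 1)| :=
        Finset.abs_sum_le_sum_abs _ _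
    _ ≤ ∑ j, ‖v‖ * |L (Pi.single j 1)| := by
        refine Finset.sum_le_sum fun j _ => ?_
        rw [abs_mul]
        exact mul_le_mul_of_nonneg_right (by
          simpa [Real.norm_eq_abs] using norm_le_pi_norm v j) (abs_nonneg _)
    _ = (∑ j, |L (Pi.single j 1)|) * ‖v‖ := by rw [← Finset.mul_sum, mul_comm]

lemma opnorm_le_sum (L : (Fin n → ℝ) →L[ℝ] ℝ) :
    ‖L‖ ≤ ∑ j, |L (Pi.single j 1)| := by
  refine ContinuousLinearMap.opNorm_le_bound _ (Finset.sum_nonneg fun j _ => abs_nonneg _) ?_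
  intro v
  simpa [Real.norm_eq_abs] using clm_abs_le L v

/-- Mean value bound on a convex set, in terms of bounds on the partial derivatives. -/
lemma lip_scalar {q : (Fin n → ℝ) → ℝ} (hq : Differentiable ℝ q)
    {M : Set (Fin n → ℝ)} (hM : Convex ℝ M) {S : Fin n → ℝ}
    (hS : ∀ y ∈ M, ∀ j, |fderiv ℝ q y (Pi.single j 1)| ≤ S j)
    {a b : Fin n → ℝ} (ha : a ∈ M) (hb : b ∈ M) :
    |q b - q a| ≤ (∑ j, S j) * ‖b - a‖ := by
  have hbound : ∀ y ∈ M, ‖fderiv ℝ q y‖ ≤ ∑ j, S j := fun y hy =>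
    (opnorm_le_sum _).trans (Finset.sum_le_sum fun j _ => hS y hy j)
  simpa [Real.norm_eq_abs] using
    hM.norm_image_sub_le_of_norm_fderiv_le (fun y _ => hq y)
      hbound ha hb

end Aux2

section Aux3
variable {n : ℕ}

lemma pderiv'_pderiv' {g : (Fin n → ℝ) → ℝ} (hg : ContDiff ℝ 3 g) (l j : Fin n) (y : Fin n → ℝ) :
    pderiv' l (pderiv' j g) y = fderiv ℝ (fderiv ℝ g) y (Pi.single l 1) (Pi.single j 1) := by
  have hfd : ContDiff ℝ 2 (fderiv ℝ g) := hg.fderiv_right (by norm_num)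
  have h1 : DifferentiableAt ℝ (fderiv ℝ g) y := (hfd.differentiable (by norm_num)) y
  show fderiv ℝ (fun z => fderiv ℝ g z (Pi.single j 1)) y (Pi.single l 1) = _
  rw [fderiv_clm_apply h1 (differentiableAt_const _)]
  simp

lemma pderiv'_comm {g : (Fin n → ℝ) → ℝ} (hg : ContDiff ℝ 3 g) (l j : Fin n) (y : Fin n → ℝ) :
    pderiv' l (pderiv' j g) y = pderiv' j (pderiv' l g) y := by
  rw [pderiv'_pderiv' hg, pderiv'_pderiv' hg]
  exact (hg.contDiffAt.isSymmSndFDerivAt (by norm_num)) _ _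

lemma pderiv'_differentiable {g : (Fin n → ℝ) → ℝ} (hg : ContDiff ℝ 3 g) (j : Fin n) :
    Differentiable ℝ (pderiv' j g) := by
  have hfd : ContDiff ℝ 2 (fderiv ℝ g) := hg.fderiv_right (by norm_num)
  exact (hfd.clm_apply contDiff_const).differentiable (by norm_num)

/-- Second-order Taylor bound on a convex set. -/
lemma taylor_k {g : (Fin n → ℝ) → ℝ} (hg : ContDiff ℝ 3 g)
    {M : Set (Fin n → ℝ)} (hM : Convex ℝ M) {S : Fin n → Fin n → ℝ}
    (hS : ∀ y ∈ M, ∀ j l, |fderiv ℝ (pderiv' j g) y (Pi.single l 1)| ≤ S j l)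
    {a b : Fin n → ℝ} (ha : a ∈ M) (hb : b ∈ M) :
    |g b - g a - fderiv ℝ g a (b - a)| ≤ (∑ j, ∑ l, S j l) * (‖b - a‖ * ‖b - a‖) := by
  have hgd : Differentiable ℝ g := hg.differentiable (by norm_num)
  have hS0 : ∀ j l, 0 ≤ S j l := fun j l => (abs_nonneg _).trans (hS a ha j l)
  have hdiff : ∀ z ∈ segment ℝ a b, DifferentiableAt ℝ (fun z => g z - fderiv ℝ g a z) z :=
    fun z _ => (hgd z).sub ((fderiv ℝ g a).differentiable.differentiableAt)
  have hfderiv : ∀ z, fderiv ℝ (fun z => g z - fderiv ℝ g a z) z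
      = fderiv ℝ g z - fderiv ℝ g a := fun z => by
    rw [fderiv_fun_sub (hgd z) ((fderiv ℝ g a).differentiable.differentiableAt),
      (fderiv ℝ g a).fderiv]
  have hseg : segment ℝ a b ⊆ M := hM.segment_subset ha hb
  have hzb : ∀ z ∈ segment ℝ a b, ‖z - a‖ ≤ ‖b - a‖ := by
    rintro z ⟨t1, t2, h1, h2, hsum, rfl⟩
    have hz : t1 • a + t2 • b - a = t2 • (b - a) := by
      have ht1 : t1 = 1 - t2 := by linarith
      rw [ht1]; module
    rw [hz, norm_smul, Real.norm_eq_abs, abs_of_nonneg h2]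
    exact mul_le_of_le_one_left (norm_nonneg _) (by linarith)
  have bound : ∀ z ∈ segment ℝ a b,
      ‖fderiv ℝ (fun z => g z - fderiv ℝ g a z) z‖ ≤ (∑ j, ∑ l, S j l) * ‖b - a‖ := by
    intro z hz
    rw [hfderiv z]
    refine (opnorm_le_sum _).trans ?_
    have hj : ∀ j : Fin n, |(fderiv ℝ g z - fderiv ℝ g a) (Pi.single j 1)|
        ≤ (∑ l, S j l) * ‖b - a‖ := by
      intro j
      have hlip := lip_scalar (pderiv'_differentiable hg j) hM
        (fun y hy l => hS y hy j l) ha (hseg hz)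
      have heq : (fderiv ℝ g z - fderiv ℝ g a) (Pi.single j 1)
          = pderiv' j g z - pderiv' j g a := rfl
      rw [heq]
      refine hlip.trans ?_
      exact mul_le_mul_of_nonneg_left (hzb z hz) (Finset.sum_nonneg fun l _ => hS0 j l)
    calc ∑ j, |(fderiv ℝ g z - fderiv ℝ g a) (Pi.single j 1)|
        ≤ ∑ j, (∑ l, S j l) * ‖b - a‖ := Finset.sum_le_sum fun j _ => hj j
      _ = (∑ j, ∑ l, S j l) * ‖b - a‖ := (Finset.sum_mul _ _ _).symm
  have key := (convex_segment a b).norm_image_sub_le_of_norm_fderiv_le hdiff bound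
    (left_mem_segment ℝ a b) (right_mem_segment ℝ a b)
  have heq2 : (g b - fderiv ℝ g a b) - (g a - fderiv ℝ g a a)
      = g b - g a - fderiv ℝ g a (b - a) := by
    rw [(fderiv ℝ g a).map_sub]; ring
  rw [heq2] at key
  calc |g b - g a - fderiv ℝ g a (b - a)| ≤ (∑ j, ∑ l, S j l) * ‖b - a‖ * ‖b - a‖ := by
        simpa [Real.norm_eq_abs] using key
    _ = (∑ j, ∑ l, S j l) * (‖b - a‖ * ‖b - a‖) := by ring

/-- Bootstrap (Gronwall-type) estimate. -/
lemma bootstrap {t L B : ℝ} (ht : 0 < t) (hL : 0 ≤ L) (hB : 0 ≤ B)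
    (hLt : L * t ≤ 1 / 2) (c : Fin n → ℝ) {f g : ℝ → Fin n → ℝ}
    (hg : IntervalIntegrable g volume 0 t)
    (hf : ∀ s ∈ Icc (0:ℝ) t, f s = c + ∫ r in (0:ℝ)..s, g r)
    (hbd : ∀ r ∈ Icc (0:ℝ) t, ‖g r‖ ≤ L * ‖f r‖ + B) :
    ∀ s ∈ Icc (0:ℝ) t, ‖f s‖ ≤ 2 * (‖c‖ + B * t) := by
  set F : ℝ → Fin n → ℝ := fun s => c + ∫ r in (0:ℝ)..s, g r with hF
  have hFc : ContinuousOn F (Icc 0 t) := by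
    have h1 := intervalIntegral.continuousOn_primitive_interval' hg
      (by rw [uIcc_of_le ht.le]; exact ⟨le_rfl, ht.le⟩)
    rw [uIcc_of_le ht.le] at h1
    exact continuousOn_const.add h1
  set φ : ℝ := sSup ((fun s => ‖F s‖) '' Icc 0 t) with hφ
  have hne : (Icc (0:ℝ) t).Nonempty := ⟨0, le_rfl, ht.le⟩
  have hbdd : BddAbove ((fun s => ‖F s‖) '' Icc 0 t) :=
    (isCompact_Icc.image_of_continuousOn hFc.norm).bddAbove
  have hφle : ∀ s ∈ Icc (0:ℝ) t, ‖F s‖ ≤ φ := fun s hs =>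
    le_csSup hbdd (mem_image_of_mem _ hs)
  have hφ0 : 0 ≤ φ := (norm_nonneg _).trans (hφle 0 ⟨le_rfl, ht.le⟩)
  have hfF : ∀ s ∈ Icc (0:ℝ) t, f s = F s := hf
  have key : ∀ s ∈ Icc (0:ℝ) t, ‖F s‖ ≤ ‖c‖ + (L * φ + B) * t := by
    intro s hs
    have hs0 : (0:ℝ) ≤ s := hs.1
    have hgs : IntervalIntegrable g volume 0 s :=
      hg.mono_set (by rw [uIcc_of_le hs0, uIcc_of_le ht.le]; exact Icc_subset_Icc le_rfl hs.2)
    have h2 : ‖∫ r in (0:ℝ)..s, g r‖ ≤ ∫ r in (0:ℝ)..s, ‖g r‖ :=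
      intervalIntegral.norm_integral_le_integral_norm hs0
    have h3 : (∫ r in (0:ℝ)..s, ‖g r‖) ≤ ∫ _ in (0:ℝ)..s, (L * φ + B) := by
      refine intervalIntegral.integral_mono_on hs0 hgs.norm intervalIntegrable_const ?_
      intro r hr
      have hrt : r ∈ Icc (0:ℝ) t := ⟨hr.1, hr.2.trans hs.2⟩
      calc ‖g r‖ ≤ L * ‖f r‖ + B := hbd r hrt
        _ ≤ L * φ + B := by
            have := (hfF r hrt ▸ hφle r hrt : ‖f r‖ ≤ φ)
            nlinarith
    have h4 : (∫ _ in (0:ℝ)..s, (L * φ + B)) = (L * φ + B) * s := by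
      rw [intervalIntegral.integral_const]; simp [smul_eq_mul]; ring
    have h5 : (L * φ + B) * s ≤ (L * φ + B) * t :=
      mul_le_mul_of_nonneg_left hs.2 (by positivity)
    calc ‖F s‖ ≤ ‖c‖ + ‖∫ r in (0:ℝ)..s, g r‖ := norm_add_le _ _
      _ ≤ ‖c‖ + (L * φ + B) * t := by
          have := h2.trans (h3.trans_eq h4)
          linarith
  have hφle2 : φ ≤ ‖c‖ + (L * φ + B) * t := by
    refine csSup_le (hne.image _) ?_
    rintro _ ⟨s, hs, rfl⟩
    exact key s hs
  have hLφt : L * φ * t ≤ φ / 2 := by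
    have := mul_le_mul_of_nonneg_right hLt hφ0
    nlinarith
  have hφfin : φ ≤ 2 * (‖c‖ + B * t) := by nlinarith
  intro s hs
  rw [hfF s hs]
  exact (hφle s hs).trans hφfin

end Aux3

/-- `‖D^{(j)}V‖_{∞,U} = Σ_{|β|=j} Σ_{k=1}^{n} sup_{x∈U} |D^β V_k(x)|`. -/
noncomputable def DjNorm {n : ℕ} (j : ℕ) (V : (Fin n → ℝ) → Fin n → ℝ)
    (U : Set (Fin n → ℝ)) : ℝ :=
  ∑ β ∈ Finset.univ.filter (fun β : Fin n → Fin (j + 1) => ∑ i, (β i : ℕ) = j),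
    ∑ k : Fin n,
      sSup ((fun x => |mderiv' (fun i => (β i : ℕ)) (fun z => V z k) x|) '' U)

/-- `t* = min(1/(2‖D^{(1)}V‖_{∞,M}), t₀)`, with the convention `1/0 = ∞`. -/
noncomputable def tstar {n : ℕ} (V : (Fin n → ℝ) → Fin n → ℝ) (M : Set (Fin n → ℝ))
    (t₀ : ℝ) : ℝ :=
  if DjNorm 1 V M = 0 then t₀ else min (1 / (2 * DjNorm 1 V M)) t₀

set_option maxHeartbeats 1000000 in
/-- In the flow setup, for all `t ∈ (0, t*]`, `x ∈ K₂` and `i ∈ {1,…,n}`,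
the derivative `D_iY^x(t) = lim_{u→0} (Y^{x+u e_i}(t) − Y^x(t))/u` exists and
`‖D_iY^x(t)‖ ≤ 2`. -/
theorem stmt5 {n : ℕ} (hn : 1 ≤ n) (t₀ : ℝ) (ht₀ : 0 < t₀)
    (K M : Set (Fin n → ℝ)) (hMconv : Convex ℝ M)
    (V : (Fin n → ℝ) → Fin n → ℝ) (hV : ContDiff ℝ 3 V)
    (hVbdd : ∀ j : ℕ, j ≤ 3 → ∀ β : Fin n → ℕ, (∑ i, β i) = j → ∀ k : Fin n,
      BddAbove ((fun x => |mderiv' β (fun z => V z k) x|) '' M))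
    (X : ℝ → Fin n → ℝ) (hX0 : X 0 = 0)
    (Y : (Fin n → ℝ) → ℝ → Fin n → ℝ)
    (hYint : ∀ x ∈ ⋃ y ∈ K, Metric.ball y (3:ℝ), ∀ t ∈ Set.Icc (0:ℝ) t₀,
      IntervalIntegrable (fun s => V (Y x s)) volume 0 t)
    (hY : ∀ x ∈ ⋃ y ∈ K, Metric.ball y (3:ℝ), ∀ t ∈ Set.Icc (0:ℝ) t₀,
      Y x t = x + X t + ∫ s in (0:ℝ)..t, V (Y x s))
    (hYM : ∀ x ∈ ⋃ y ∈ K, Metric.ball y (3:ℝ), ∀ t ∈ Set.Icc (0:ℝ) t₀, Y x t ∈ M) :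
    ∀ t ∈ Set.Ioc (0:ℝ) (tstar V M t₀), ∀ x ∈ ⋃ y ∈ K, Metric.ball y (2:ℝ), ∀ i : Fin n,
      ∃ D : Fin n → ℝ,
        Filter.Tendsto (fun u : ℝ => u⁻¹ • (Y (x + u • (Pi.single i 1 : Fin n → ℝ)) t - Y x t))
          (𝓝[≠] (0:ℝ)) (𝓝 D) ∧ ‖D‖ ≤ 2 := by
  intro t ht x hx i
  classical
  obtain ⟨ht0, htstar⟩ := ht
  -- membership facts
  rw [Set.mem_iUnion₂] at hx
  obtain ⟨y₀, hy₀K, hxy₀⟩ := hx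
  have hxK3 : x ∈ ⋃ y ∈ K, Metric.ball y (3:ℝ) := by
    rw [Set.mem_iUnion₂]
    exact ⟨y₀, hy₀K, Metric.mem_ball.2 ((Metric.mem_ball.1 hxy₀).trans (by norm_num))⟩
  have htt₀ : t ≤ t₀ := by
    unfold tstar at htstar
    split_ifs at htstar with h
    · exact htstar
    · exact htstar.trans (min_le_right _ _)
  have htIcc : t ∈ Icc (0:ℝ) t₀ := ⟨ht0.le, htt₀⟩
  have hy₀M : Y x t ∈ M := hYM x hxK3 t htIcc
  set y₀M : Fin n → ℝ := Y x t with hy₀Mdef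
  -- component smoothness
  have hVk : ∀ k : Fin n, ContDiff ℝ 3 (fun z => V z k) := fun k => contDiff_pi.mp hV k
  -- first-order sup bounds
  set T : Fin n → Fin n → ℝ :=
    fun k j => sSup ((fun z => |pderiv' j (fun w => V w k) z|) '' M) with hTdef
  have hTbdd : ∀ k j, BddAbove ((fun z => |pderiv' j (fun w => V w k) z|) '' M) := by
    intro k j
    have h := hVbdd 1 (by norm_num) (Pi.single j 1) (by simp [Pi.single_apply]) k
    rwa [mderiv'_single, Function.iterate_one] at h
  have hT : ∀ k j, ∀ z ∈ M, |pderiv' j (fun w => V w k) z| ≤ T k j := fun k j z hz =>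
    le_csSup (hTbdd k j) (mem_image_of_mem _ hz)
  have hT0 : ∀ k j, 0 ≤ T k j := fun k j => (abs_nonneg _).trans (hT k j _ hy₀M)
  -- second-order sup bounds
  set S : Fin n → Fin n → Fin n → ℝ := fun k j l =>
    sSup ((fun y => |fderiv ℝ (pderiv' j (fun w => V w k)) y (Pi.single l 1)|) '' M) with hSdef
  have hSbdd : ∀ k j l,
      BddAbove ((fun y => |fderiv ℝ (pderiv' j (fun w => V w k)) y (Pi.single l 1)|) '' M) := by
    intro k j l
    have hfun : (fun y => |fderiv ℝ (pderiv' j (fun w => V w k)) y (Pi.single l 1)|)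
        = fun y => |pderiv' l (pderiv' j (fun w => V w k)) y| := rfl
    rw [hfun]
    rcases lt_trichotomy l j with hlj | hlj | hlj
    · have h := hVbdd 2 (by norm_num) (Pi.single l 1 + Pi.single j 1)
        (by simp [Pi.single_apply, Finset.sum_add_distrib]) k
      rwa [mderiv'_pair hlj] at h
    · subst hlj
      have h := hVbdd 2 (by norm_num) (Pi.single l 2) (by simp [Pi.single_apply]) k
      rw [mderiv'_single] at h
      have h2 : (pderiv' l)^[2] (fun w => V w k) = pderiv' l (pderiv' l (fun w => V w k)) := rfl
      rwa [h2] at h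
    · have h := hVbdd 2 (by norm_num) (Pi.single j 1 + Pi.single l 1)
        (by simp [Pi.single_apply, Finset.sum_add_distrib]) k
      rw [mderiv'_pair hlj] at h
      have hfun2 : (fun y => |pderiv' l (pderiv' j (fun w => V w k)) y|)
          = fun y => |pderiv' j (pderiv' l (fun w => V w k)) y| :=
        funext fun y => by rw [pderiv'_comm (hVk k) l j y]
      rwa [hfun2]
  have hS : ∀ k j l, ∀ y ∈ M,
      |fderiv ℝ (pderiv' j (fun w => V w k)) y (Pi.single l 1)| ≤ S k j l := fun k j l y hy =>
    le_csSup (hSbdd k j l) (mem_image_of_mem _ hy)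
  have hS0 : ∀ k j l, 0 ≤ S k j l := fun k j l => (abs_nonneg _).trans (hS k j l _ hy₀M)
  set C2 : ℝ := ∑ k, ∑ j, ∑ l, S k j l with hC2def
  have hC2k : ∀ k, (∑ j, ∑ l, S k j l) ≤ C2 :=
    fun k => Finset.single_le_sum
      (fun k' _ => Finset.sum_nonneg fun j _ => Finset.sum_nonneg fun l _ => hS0 k' j l)
      (Finset.mem_univ k)
  have hC20 : 0 ≤ C2 :=
    Finset.sum_nonneg fun k _ => Finset.sum_nonneg fun j _ =>
      Finset.sum_nonneg fun l _ => hS0 k j l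
  -- DjNorm 1 dominates the first-order sums
  have hLT : ∀ k, (∑ j, T k j) ≤ DjNorm 1 V M := by
    intro k
    set F := Finset.univ.filter (fun β : Fin n → Fin (1 + 1) => ∑ i', (β i' : ℕ) = 1) with hFdef
    set c : (Fin n → Fin (1 + 1)) → ℝ := fun β =>
      ∑ k' : Fin n, sSup ((fun z => |mderiv' (fun i' => (β i' : ℕ)) (fun w => V w k') z|) '' M)
      with hcdef
    have hDj : DjNorm 1 V M = ∑ β ∈ F, c β := rfl
    have hc0 : ∀ β ∈ F, (0:ℝ) ≤ c β := by
      intro β hβ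
      refine Finset.sum_nonneg fun k' _ => ?_
      exact (abs_nonneg _).trans (le_csSup
        (hVbdd 1 (by norm_num) _ (Finset.mem_filter.1 hβ).2 k') (mem_image_of_mem _ hy₀M))
    set e : Fin n → (Fin n → Fin (1 + 1)) := fun j i' => if i' = j then 1 else 0 with hedef
    have hecoerce : ∀ j, (fun i' => ((e j i' : Fin (1 + 1)) : ℕ)) = (Pi.single j 1 : Fin n → ℕ) := by
      intro j; funext i'
      simp only [hedef, Pi.single_apply]
      split <;> rfl
    have hemem : ∀ j, e j ∈ F := by
      intro j
      refine Finset.mem_filter.2 ⟨Finset.mem_univ _, ?_⟩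
      calc ∑ i', ((e j i' : Fin (1 + 1)) : ℕ) = ∑ i', (Pi.single j 1 : Fin n → ℕ) i' := by
            rw [hecoerce j]
        _ = 1 := by simp [Pi.single_apply]
    have hinj : ∀ j ∈ Finset.univ, ∀ j' ∈ Finset.univ, e j = e j' → j = j' := by
      intro j _ j' _ h
      by_contra hne
      have := congrFun h j
      simp only [hedef, if_pos rfl] at this
      rw [if_neg hne] at this
      exact absurd this (by decide)
    have himg : ∑ j, c (e j) = ∑ β ∈ Finset.univ.image e, c β := (Finset.sum_image hinj).symm
    have hsub : Finset.univ.image e ⊆ F := by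
      intro β hβ
      obtain ⟨j, _, rfl⟩ := Finset.mem_image.1 hβ
      exact hemem j
    have hle1 : ∑ β ∈ Finset.univ.image e, c β ≤ ∑ β ∈ F, c β :=
      Finset.sum_le_sum_of_subset_of_nonneg hsub (fun β hβ _ => hc0 β hβ)
    have hTc : ∀ j, T k j ≤ c (e j) := by
      intro j
      have h1 : c (e j) = ∑ k' : Fin n, T k' j := by
        simp only [hcdef, hTdef]
        refine Finset.sum_congr rfl fun k' _ => ?_
        rw [hecoerce j, mderiv'_single, Function.iterate_one]
      rw [h1]
      exact Finset.single_le_sum (fun k' _ => hT0 k' j) (Finset.mem_univ k)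
    calc (∑ j, T k j) ≤ ∑ j, c (e j) := Finset.sum_le_sum fun j _ => hTc j
      _ = ∑ β ∈ Finset.univ.image e, c β := himg
      _ ≤ ∑ β ∈ F, c β := hle1
      _ = DjNorm 1 V M := hDj.symm
  set L : ℝ := DjNorm 1 V M with hLdef
  have hL0 : 0 ≤ L := (Finset.sum_nonneg fun j _ => hT0 i j).trans (hLT i)
  have hLt : L * t ≤ 1 / 2 := by
    unfold tstar at htstar
    by_cases hL : DjNorm 1 V M = 0
    · rw [hLdef, hL, zero_mul]; norm_num
    · rw [if_neg hL] at htstar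
      have hLpos : 0 < L := lt_of_le_of_ne hL0 (Ne.symm hL)
      have h2 : t ≤ 1 / (2 * L) := htstar.trans (min_le_left _ _)
      have := mul_le_mul_of_nonneg_left h2 hL0
      calc L * t ≤ L * (1 / (2 * L)) := this
        _ = 1 / 2 := by
            field_simp
  -- Lipschitz bound for V on M
  have hVlip : ∀ a ∈ M, ∀ b ∈ M, ‖V b - V a‖ ≤ L * ‖b - a‖ := by
    intro a ha b hb
    refine (pi_norm_le_iff_of_nonneg (mul_nonneg hL0 (norm_nonneg _))).2 fun k => ?_
    have hlip := lip_scalar ((hVk k).differentiable (by norm_num)) hMconv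
      (fun y hy j => hT k j y hy) ha hb
    have heq : (V b - V a) k = (fun z => V z k) b - (fun z => V z k) a := rfl
    rw [Real.norm_eq_abs, heq]
    exact hlip.trans (mul_le_mul_of_nonneg_right (hLT k) (norm_nonneg _))
  -- bound for the derivative map
  have hAle : ∀ a ∈ M, ∀ w : Fin n → ℝ,
      ‖(fun k => fderiv ℝ (fun z => V z k) a w : Fin n → ℝ)‖ ≤ L * ‖w‖ := by
    intro a ha w
    refine (pi_norm_le_iff_of_nonneg (mul_nonneg hL0 (norm_nonneg _))).2 fun k => ?_
    rw [Real.norm_eq_abs]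
    calc |fderiv ℝ (fun z => V z k) a w|
        ≤ (∑ j, |fderiv ℝ (fun z => V z k) a (Pi.single j 1)|) * ‖w‖ :=
          clm_abs_le (fderiv ℝ (fun z => V z k) a) w
      _ ≤ (∑ j, T k j) * ‖w‖ :=
          mul_le_mul_of_nonneg_right (Finset.sum_le_sum fun j _ => hT k j a ha) (norm_nonneg _)
      _ ≤ L * ‖w‖ := mul_le_mul_of_nonneg_right (hLT k) (norm_nonneg _)
  -- Taylor bound for V on M
  have hTay : ∀ a ∈ M, ∀ b ∈ M,
      ‖V b - V a - (fun k => fderiv ℝ (fun z => V z k) a (b - a))‖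
        ≤ C2 * (‖b - a‖ * ‖b - a‖) := by
    intro a ha b hb
    refine (pi_norm_le_iff_of_nonneg
      (mul_nonneg hC20 (mul_nonneg (norm_nonneg _) (norm_nonneg _)))).2 fun k => ?_
    rw [Real.norm_eq_abs]
    have h := taylor_k (hVk k) hMconv (fun y hy j l => hS k j l y hy) ha hb
    have heq : (V b - V a - (fun k => fderiv ℝ (fun z => V z k) a (b - a))) k
        = (fun z => V z k) b - (fun z => V z k) a - fderiv ℝ (fun z => V z k) a (b - a) := rfl
    rw [heq]
    exact h.trans (mul_le_mul_of_nonneg_right (hC2k k)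
      (mul_nonneg (norm_nonneg _) (norm_nonneg _)))
  -- trajectories
  set E : Fin n → ℝ := Pi.single i 1 with hEdef
  have hEnorm : ‖E‖ = 1 := by rw [hEdef, Pi.norm_single, norm_one]
  have hK3 : ∀ u : ℝ, |u| < 1 → x + u • E ∈ ⋃ y ∈ K, Metric.ball y (3:ℝ) := by
    intro u hu
    rw [Set.mem_iUnion₂]
    refine ⟨y₀, hy₀K, Metric.mem_ball.2 ?_⟩
    have h1 : dist (x + u • E) y₀ ≤ dist (x + u • E) x + dist x y₀ := dist_triangle _ _ _
    have h2 : dist (x + u • E) x = |u| := by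
      rw [dist_eq_norm, add_sub_cancel_left, norm_smul, Real.norm_eq_abs, hEnorm, mul_one]
    have h3 : dist x y₀ < 2 := Metric.mem_ball.1 hxy₀
    calc dist (x + u • E) y₀ ≤ |u| + dist x y₀ := by rw [← h2]; exact h1
      _ < 3 := by linarith
  have hYMmem : ∀ u : ℝ, |u| < 1 → ∀ r ∈ Icc (0:ℝ) t, Y (x + u • E) r ∈ M := by
    intro u hu r hr
    exact hYM _ (hK3 u hu) r ⟨hr.1, hr.2.trans htt₀⟩
  have hYxM : ∀ r ∈ Icc (0:ℝ) t, Y x r ∈ M := fun r hr =>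
    hYM x hxK3 r ⟨hr.1, hr.2.trans htt₀⟩
  have hident : ∀ u : ℝ, |u| < 1 → ∀ s ∈ Icc (0:ℝ) t,
      Y (x + u • E) s - Y x s
        = u • E + ∫ r in (0:ℝ)..s, (V (Y (x + u • E) r) - V (Y x r)) := by
    intro u hu s hs
    have hs' : s ∈ Icc (0:ℝ) t₀ := ⟨hs.1, hs.2.trans htt₀⟩
    rw [hY _ (hK3 u hu) s hs', hY x hxK3 s hs',
      intervalIntegral.integral_sub (hYint _ (hK3 u hu) s hs') (hYint x hxK3 s hs')]
    abel
  have hint : ∀ u : ℝ, |u| < 1 →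
      IntervalIntegrable (fun r => V (Y (x + u • E) r) - V (Y x r)) volume 0 t :=
    fun u hu => (hYint _ (hK3 u hu) t htIcc).sub (hYint x hxK3 t htIcc)
  -- first bootstrap : basic Lipschitz-in-initial-data bound
  have hWb : ∀ u : ℝ, |u| < 1 → ∀ s ∈ Icc (0:ℝ) t,
      ‖Y (x + u • E) s - Y x s‖ ≤ 2 * |u| := by
    intro u hu
    have hbd : ∀ r ∈ Icc (0:ℝ) t,
        ‖V (Y (x + u • E) r) - V (Y x r)‖ ≤ L * ‖Y (x + u • E) r - Y x r‖ + 0 := by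
      intro r hr
      rw [add_zero]
      exact hVlip _ (hYxM r hr) _ (hYMmem u hu r hr)
    have happ := bootstrap ht0 hL0 le_rfl hLt (u • E) (hint u hu) (hident u hu) hbd
    intro s hs
    have h2 := happ s hs
    rw [norm_smul, Real.norm_eq_abs, hEnorm, mul_one] at h2
    calc ‖Y (x + u • E) s - Y x s‖ ≤ 2 * (|u| + 0 * t) := h2
      _ = 2 * |u| := by ring
  -- bound on difference quotients
  have hZb : ∀ u : ℝ, u ≠ 0 → |u| < 1 → ‖u⁻¹ • (Y (x + u • E) t - Y x t)‖ ≤ 2 := by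
    intro u hu hu1
    have h0u : (0:ℝ) < |u| := abs_pos.2 hu
    rw [norm_smul, Real.norm_eq_abs, abs_inv]
    have h1 := hWb u hu1 t ⟨ht0.le, le_rfl⟩
    calc |u|⁻¹ * ‖Y (x + u • E) t - Y x t‖ ≤ |u|⁻¹ * (2 * |u|) :=
          mul_le_mul_of_nonneg_left h1 (by positivity)
      _ = 2 := by field_simp
  -- second bootstrap : Cauchy estimate between difference quotients
  have key2 : ∀ u v : ℝ, u ≠ 0 → |u| < 1 → v ≠ 0 → |v| < 1 →
      ‖u⁻¹ • (Y (x + u • E) t - Y x t) - v⁻¹ • (Y (x + v • E) t - Y x t)‖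
        ≤ 8 * C2 * t * (|u| + |v|) := by
    intro u v hu hu1 hv hv1
    have h0u : (0:ℝ) < |u| := abs_pos.2 hu
    have h0v : (0:ℝ) < |v| := abs_pos.2 hv
    have hintu := hint u hu1
    have hintv := hint v hv1
    have hZid : ∀ (w : ℝ), w ≠ 0 → |w| < 1 → ∀ s ∈ Icc (0:ℝ) t,
        w⁻¹ • (Y (x + w • E) s - Y x s)
          = E + ∫ r in (0:ℝ)..s, w⁻¹ • (V (Y (x + w • E) r) - V (Y x r)) := by
      intro w hw hw1 s hs
      rw [hident w hw1 s hs, smul_add, smul_smul, inv_mul_cancel₀ hw, one_smul,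
        intervalIntegral.integral_smul]
    have hfid : ∀ s ∈ Icc (0:ℝ) t,
        u⁻¹ • (Y (x + u • E) s - Y x s) - v⁻¹ • (Y (x + v • E) s - Y x s)
          = (0 : Fin n → ℝ) + ∫ r in (0:ℝ)..s,
              (u⁻¹ • (V (Y (x + u • E) r) - V (Y x r))
                - v⁻¹ • (V (Y (x + v • E) r) - V (Y x r))) := by
      intro s hs
      have hsubI : Set.uIcc (0:ℝ) s ⊆ Set.uIcc (0:ℝ) t := by
        rw [uIcc_of_le hs.1, uIcc_of_le ht0.le]
        exact Icc_subset_Icc le_rfl hs.2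
      have h1 : IntervalIntegrable (fun r => u⁻¹ • (V (Y (x + u • E) r) - V (Y x r)))
          volume 0 s := ((hintu).smul u⁻¹).mono_set hsubI
      have h2 : IntervalIntegrable (fun r => v⁻¹ • (V (Y (x + v • E) r) - V (Y x r)))
          volume 0 s := ((hintv).smul v⁻¹).mono_set hsubI
      rw [intervalIntegral.integral_sub h1 h2, hZid u hu hu1 s hs, hZid v hv hv1 s hs]
      abel
    have hbd2 : ∀ r ∈ Icc (0:ℝ) t,
        ‖u⁻¹ • (V (Y (x + u • E) r) - V (Y x r))
            - v⁻¹ • (V (Y (x + v • E) r) - V (Y x r))‖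
          ≤ L * ‖u⁻¹ • (Y (x + u • E) r - Y x r) - v⁻¹ • (Y (x + v • E) r - Y x r)‖
            + 4 * C2 * (|u| + |v|) := by
      intro r hr
      have haM : Y x r ∈ M := hYxM r hr
      have hbuM : Y (x + u • E) r ∈ M := hYMmem u hu1 r hr
      have hbvM : Y (x + v • E) r ∈ M := hYMmem v hv1 r hr
      set a : Fin n → ℝ := Y x r
      set bu : Fin n → ℝ := Y (x + u • E) r
      set bv : Fin n → ℝ := Y (x + v • E) r
      set A : (Fin n → ℝ) → (Fin n → ℝ) :=
        fun w => fun k => fderiv ℝ (fun z => V z k) a w with hAdef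
      have hAadd : ∀ (c d : ℝ) (w w' : Fin n → ℝ), A (c • w - d • w') = c • A w - d • A w' := by
        intro c d w w'
        funext k
        simp [hAdef, map_sub, _root_.map_smul, smul_eq_mul]
      set Ru : Fin n → ℝ := V bu - V a - A (bu - a) with hRudef
      set Rv : Fin n → ℝ := V bv - V a - A (bv - a) with hRvdef
      have hRule : ‖Ru‖ ≤ C2 * (‖bu - a‖ * ‖bu - a‖) := hTay a haM bu hbuM
      have hRvle : ‖Rv‖ ≤ C2 * (‖bv - a‖ * ‖bv - a‖) := hTay a haM bv hbvM
      have hdecomp : u⁻¹ • (V bu - V a) - v⁻¹ • (V bv - V a)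
          = A (u⁻¹ • (bu - a) - v⁻¹ • (bv - a)) + (u⁻¹ • Ru - v⁻¹ • Rv) := by
        rw [hAadd]
        have h1 : V bu - V a = A (bu - a) + Ru := by rw [hRudef]; abel
        have h2 : V bv - V a = A (bv - a) + Rv := by rw [hRvdef]; abel
        rw [h1, h2, smul_add, smul_add]
        abel
      have hRuineq : ‖u⁻¹ • Ru‖ ≤ 4 * C2 * |u| := by
        have hw : ‖bu - a‖ ≤ 2 * |u| := hWb u hu1 r hr
        have h3 : ‖Ru‖ ≤ C2 * (2 * |u| * (2 * |u|)) := by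
          refine hRule.trans (mul_le_mul_of_nonneg_left ?_ hC20)
          nlinarith [norm_nonneg (bu - a)]
        rw [norm_smul, Real.norm_eq_abs, abs_inv]
        calc |u|⁻¹ * ‖Ru‖ ≤ |u|⁻¹ * (C2 * (2 * |u| * (2 * |u|))) :=
              mul_le_mul_of_nonneg_left h3 (by positivity)
          _ = 4 * C2 * |u| := by field_simp; ring
      have hRvineq : ‖v⁻¹ • Rv‖ ≤ 4 * C2 * |v| := by
        have hw : ‖bv - a‖ ≤ 2 * |v| := hWb v hv1 r hr
        have h3 : ‖Rv‖ ≤ C2 * (2 * |v| * (2 * |v|)) := by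
          refine hRvle.trans (mul_le_mul_of_nonneg_left ?_ hC20)
          nlinarith [norm_nonneg (bv - a)]
        rw [norm_smul, Real.norm_eq_abs, abs_inv]
        calc |v|⁻¹ * ‖Rv‖ ≤ |v|⁻¹ * (C2 * (2 * |v| * (2 * |v|))) :=
              mul_le_mul_of_nonneg_left h3 (by positivity)
          _ = 4 * C2 * |v| := by field_simp; ring
      have hsmulsub : ∀ (w : ℝ) (p q : Fin n → ℝ), w⁻¹ • (p - q) = w⁻¹ • p - w⁻¹ • q :=
        fun w p q => smul_sub _ _ _
      calc ‖u⁻¹ • (V bu - V a) - v⁻¹ • (V bv - V a)‖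
          = ‖A (u⁻¹ • (bu - a) - v⁻¹ • (bv - a)) + (u⁻¹ • Ru - v⁻¹ • Rv)‖ := by
            rw [hdecomp]
        _ ≤ ‖A (u⁻¹ • (bu - a) - v⁻¹ • (bv - a))‖ + ‖u⁻¹ • Ru - v⁻¹ • Rv‖ := norm_add_le _ _
        _ ≤ L * ‖u⁻¹ • (bu - a) - v⁻¹ • (bv - a)‖ + (‖u⁻¹ • Ru‖ + ‖v⁻¹ • Rv‖) :=
            add_le_add (hAle a haM _) (norm_sub_le _ _)
        _ ≤ L * ‖u⁻¹ • (bu - a) - v⁻¹ • (bv - a)‖ + 4 * C2 * (|u| + |v|) := by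
            have := add_le_add hRuineq hRvineq
            linarith
    have happ := bootstrap ht0 hL0
      (mul_nonneg (mul_nonneg (by norm_num) hC20) (by positivity)) hLt (0 : Fin n → ℝ)
      ((hintu.smul u⁻¹).sub (hintv.smul v⁻¹)) hfid hbd2
    have h2 := happ t ⟨ht0.le, le_rfl⟩
    rw [norm_zero] at h2
    calc ‖u⁻¹ • (Y (x + u • E) t - Y x t) - v⁻¹ • (Y (x + v • E) t - Y x t)‖
        ≤ 2 * (0 + 4 * C2 * (|u| + |v|) * t) := h2
      _ = 8 * C2 * t * (|u| + |v|) := by ring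
  -- extraction of the limit
  set q : ℝ → Fin n → ℝ := fun u => u⁻¹ • (Y (x + u • E) t - Y x t) with hqdef
  set seq : ℕ → ℝ := fun m => ((m : ℝ) + 2)⁻¹ with hseqdef
  have hseqpos : ∀ m, 0 < seq m := by
    intro m
    rw [hseqdef]
    positivity
  have hseqne : ∀ m, seq m ≠ 0 := fun m => (hseqpos m).ne'
  have hseqlt : ∀ m, |seq m| < 1 := by
    intro m
    rw [abs_of_pos (hseqpos m), hseqdef]
    refine inv_lt_one_of_one_lt₀ ?_
    have : (0:ℝ) ≤ (m:ℝ) := Nat.cast_nonneg m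
    linarith
  have hseqmono : ∀ N m : ℕ, N ≤ m → seq m ≤ seq N := by
    intro N m h
    rw [hseqdef]
    have h1 : (N:ℝ) + 2 ≤ (m:ℝ) + 2 := by
      have := (Nat.cast_le (α := ℝ)).2 h
      linarith
    exact inv_anti₀ (by positivity) h1
  have hseq0 : Tendsto seq atTop (𝓝 0) := by
    have hb : ∀ m : ℕ, seq m ≤ 1 / ((m:ℝ) + 1) := by
      intro m
      simp only [hseqdef]
      rw [← one_div]
      refine one_div_le_one_div_of_le (by positivity) ?_
      linarith
    exact squeeze_zero (fun m => (hseqpos m).le) hb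
      tendsto_one_div_add_atTop_nhds_zero_nat
  have hC8 : (0:ℝ) ≤ 8 * C2 * t := by positivity
  have hcs : CauchySeq (fun m => q (seq m)) := by
    refine cauchySeq_of_le_tendsto_0 (fun N => 16 * C2 * t * seq N) ?_ ?_
    · intro m m' N hm hm'
      rw [dist_eq_norm]
      have h1 := key2 (seq m) (seq m') (hseqne m) (hseqlt m) (hseqne m') (hseqlt m')
      have h2 : |seq m| + |seq m'| ≤ 2 * seq N := by
        rw [abs_of_pos (hseqpos m), abs_of_pos (hseqpos m')]
        have := hseqmono N m hm
        have := hseqmono N m' hm'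
        linarith
      calc ‖q (seq m) - q (seq m')‖ ≤ 8 * C2 * t * (|seq m| + |seq m'|) := h1
        _ ≤ 8 * C2 * t * (2 * seq N) := mul_le_mul_of_nonneg_left h2 hC8
        _ = 16 * C2 * t * seq N := by ring
    · have := hseq0.const_mul (16 * C2 * t)
      simpa using this
  obtain ⟨D, hD⟩ := cauchySeq_tendsto_of_complete hcs
  have hDb : ‖D‖ ≤ 2 :=
    le_of_tendsto hD.norm (Eventually.of_forall fun m => hZb (seq m) (hseqne m) (hseqlt m))
  have hclose : ∀ u : ℝ, u ≠ 0 → |u| < 1 → ‖q u - D‖ ≤ 8 * C2 * t * |u| := by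
    intro u hu hu1
    have h1 : Tendsto (fun m => ‖q u - q (seq m)‖) atTop (𝓝 ‖q u - D‖) :=
      (tendsto_const_nhds.sub hD).norm
    have h2 : Tendsto (fun m => 8 * C2 * t * (|u| + seq m)) atTop (𝓝 (8 * C2 * t * (|u| + 0))) :=
      (tendsto_const_nhds.add hseq0).const_mul _
    have h3 : ∀ m, ‖q u - q (seq m)‖ ≤ 8 * C2 * t * (|u| + seq m) := by
      intro m
      have := key2 u (seq m) hu hu1 (hseqne m) (hseqlt m)
      rwa [abs_of_pos (hseqpos m)] at this
    have := le_of_tendsto_of_tendsto' h1 h2 h3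
    simpa using this
  refine ⟨D, ?_, hDb⟩
  have hsq : Tendsto (fun u => q u - D) (𝓝[≠] (0:ℝ)) (𝓝 0) := by
    refine squeeze_zero_norm' (a := fun u : ℝ => 8 * C2 * t * |u|) ?_ ?_
    · have hev : ∀ᶠ u in 𝓝[≠] (0:ℝ), |u| < 1 := by
        refine eventually_nhdsWithin_of_eventually_nhds ?_
        have := eventually_abs_sub_lt (0:ℝ) one_pos
        simpa using this
      filter_upwards [hev, self_mem_nhdsWithin] with u h1 h2
      exact hclose u h2 h1
    · have h1 : Tendsto (fun u : ℝ => 8 * C2 * t * |u|) (𝓝 0) (𝓝 (8 * C2 * t * |0|)) :=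
        (continuous_const.mul continuous_abs).tendsto 0
      rw [abs_zero, mul_zero] at h1
      exact h1.mono_left nhdsWithin_le_nhds
  exact tendsto_sub_nhds_zero_iff.mp hsq
end

section
/- Let κ be a Markov kernel from ℝ² to ℝ² (with the Borel σ-algebras) such that for every (y,s) ∈ ℝ², the measure κ((y+2π, s), ·) is the pushforward of κ((y,s), ·) under the map (u,v) ↦ (u+2π, v). Let γ : ℝ² → 𝕊¹×ℝ be given by γ(y,s) = (e^{iy}, s), where 𝕊¹ = {z ∈ ℂ : |z| = 1}. Then there exists a Markov kernel κ^𝕊 from 𝕊¹×ℝ to 𝕊¹×ℝ such that for all (y,s) ∈ ℝ² and all Borel sets E ⊆ 𝕊¹×ℝ, κ^𝕊(γ(y,s), E) = κ((y,s), γ^{-1}(E)); in particular the map γ(y,s) ↦ γ_*κ((y,s), ·) is well defined (independent of the choice of representative (y,s)). -/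
open MeasureTheory ProbabilityTheory

/-- The Borel σ-algebra on the unit circle `𝕊¹ ⊆ ℂ`. -/
noncomputable instance : MeasurableSpace Circle := borel Circle

instance : BorelSpace Circle := ⟨rfl⟩

lemma measurable_circle_coe : @Measurable Circle ℂ inferInstance _ Subtype.val := by
  exact Continuous.measurable (α := Circle) continuous_subtype_val

lemma measurable_gamma : Measurable (fun p : ℝ × ℝ => (Circle.exp p.1, p.2)) :=
  ((Circle.exp.continuous.measurable).comp measurable_fst).prodMk measurable_snd

lemma measurable_sigma : Measurable (fun q : Circle × ℝ => (Complex.arg (q.1 : ℂ), q.2)) :=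
  (Complex.measurable_arg.comp (measurable_circle_coe.comp measurable_fst)).prodMk
    measurable_snd

/-- If a Markov kernel `κ` on `ℝ²` commutes with the shift
`(y,s) ↦ (y+2π,s)`, then it induces a Markov kernel `κ^𝕊` on `𝕊¹×ℝ` with
`κ^𝕊(γ(y,s), E) = κ((y,s), γ^{-1}(E))` for the wrapping map `γ(y,s) = (e^{iy}, s)`. -/
theorem stmt16 (κ : Kernel (ℝ × ℝ) (ℝ × ℝ)) [IsMarkovKernel κ]
    (hκ : ∀ y s : ℝ, κ (y + 2 * Real.pi, s)
      = (κ (y, s)).map (fun p : ℝ × ℝ => (p.1 + 2 * Real.pi, p.2))) :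
    ∃ κS : Kernel (Circle × ℝ) (Circle × ℝ),
      IsMarkovKernel κS ∧
      ∀ y s : ℝ, ∀ E : Set (Circle × ℝ), MeasurableSet E →
        κS (Circle.exp y, s) E
          = κ (y, s) ((fun p : ℝ × ℝ => (Circle.exp p.1, p.2)) ⁻¹' E) := by
  set γ : ℝ × ℝ → Circle × ℝ := fun p => (Circle.exp p.1, p.2) with hγ
  have hγm : Measurable γ := measurable_gamma
  have hshift : Measurable (fun p : ℝ × ℝ => (p.1 + 2 * Real.pi, p.2)) :=
    (measurable_fst.add_const _).prodMk measurable_snd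
  -- one-step invariance of the wrapped measure: periodicity in y
  have hper : ∀ s : ℝ, Function.Periodic (fun y => (κ (y, s)).map γ) (2 * Real.pi) := by
    intro s y
    show (κ (y + 2 * Real.pi, s)).map γ = (κ (y, s)).map γ
    rw [hκ y s, Measure.map_map hγm hshift]
    congr 1
    funext p
    simp [hγ, Circle.exp_add_two_pi]
  -- ℤ-step invariance
  have key : ∀ (n : ℤ) (y s : ℝ),
      (κ (y + n * (2 * Real.pi), s)).map γ = (κ (y, s)).map γ := by
    intro n y s
    exact ((hper s).int_mul n) y
  -- the wrapped kernel
  refine ⟨(κ.map γ).comap (fun q : Circle × ℝ => (Complex.arg (q.1 : ℂ), q.2))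
      measurable_sigma, ?_, ?_⟩
  · have : IsMarkovKernel (κ.map γ) := Kernel.IsMarkovKernel.map κ hγm
    infer_instance
  · intro y s E hE
    rw [Kernel.comap_apply, Kernel.map_apply κ hγm]
    have hexp : Circle.exp (Complex.arg ((Circle.exp y : Circle) : ℂ)) = Circle.exp y := by
      simpa using Circle.exp_arg (Circle.exp y)
    obtain ⟨m, hm⟩ := Circle.exp_eq_exp.mp hexp
    have hmap : (κ ((Complex.arg ((Circle.exp y : Circle) : ℂ)), s)).map γ
        = (κ (y, s)).map γ := by
      rw [hm]; exact key m y s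
    simp only [hmap]
    rw [Measure.map_apply hγm hE]
end

section
/- Let W : ℝ → ℝ be 2π-periodic and C³ (so W', W'', W''' are bounded), let y, s ∈ ℝ, and let X¹, X² : [0,1] → ℝ be functions. Suppose (Y¹,S¹) and (Y²,S²) satisfy, for i ∈ {1,2} and all t ∈ [0,1], Yⁱ_t = y + Xⁱ_t + ∫₀ᵗ W'(Yⁱ_r) Sⁱ_r dr and Sⁱ_t = s + ∫₀ᵗ W''(Yⁱ_r) dr. Let c₁ = ‖W'‖_∞·‖W'''‖_∞ + ‖W''‖_∞² and c₂ = ‖W''‖_∞. Then sup_{0≤r≤1} |Y¹_r − Y²_r| ≤ sup_{0≤r≤1} |X¹_r − X²_r| · (1 + (c₁ + c₂|s|)·exp(c₁ + c₂|s|)). -/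
open MeasureTheory Filter Topology

private lemma bddAbove_abs_of_periodic {f : ℝ → ℝ} (hf : Continuous f)
    (hp : Function.Periodic f (2 * Real.pi)) :
    BddAbove (Set.range fun z => |f z|) := by
  obtain ⟨M, hM⟩ := (isCompact_Icc (a := (0:ℝ)) (b := 2 * Real.pi)).exists_bound_of_continuousOn
    hf.continuousOn
  refine ⟨M, ?_⟩
  rintro x ⟨z, rfl⟩
  obtain ⟨w, hw, hzw⟩ := hp.exists_mem_Ico₀ (by positivity) z
  simpa [hzw, Real.norm_eq_abs] using hM w (Set.Ico_subset_Icc_self hw)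

private lemma gronwall0 {f : ℝ → ℝ} (hf : Continuous f) {K : ℝ} (hK : 0 ≤ K)
    (h : ∀ t ∈ Set.Icc (0:ℝ) 1, f t ≤ K * ∫ r in (0:ℝ)..t, f r) :
    ∀ t ∈ Set.Icc (0:ℝ) 1, f t ≤ 0 := by
  set I : ℝ → ℝ := fun t => ∫ r in (0:ℝ)..t, f r with hIdef
  have hIder : ∀ t : ℝ, HasDerivAt I (f t) t := fun t =>
    (hf.integral_hasStrictDerivAt 0 t).hasDerivAt
  have hIdiff : Differentiable ℝ I := fun t => (hIder t).differentiableAt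
  have hIcont : Continuous I := hIdiff.continuous
  set N : ℝ → ℝ := fun t => Real.exp (-K * t) * I t with hNdef
  have hEder : ∀ t : ℝ, HasDerivAt (fun u => Real.exp (-K * u)) (Real.exp (-K * t) * -K) t := by
    intro t
    simpa using ((hasDerivAt_id t).const_mul (-K)).exp
  have hNder : ∀ t : ℝ, HasDerivAt N (Real.exp (-K*t) * -K * I t + Real.exp (-K*t) * f t) t :=
    fun t => (hEder t).mul (hIder t)
  have hNcont : Continuous N :=
    (Real.continuous_exp.comp (continuous_const.mul continuous_id)).mul hIcont
  have hanti : AntitoneOn N (Set.Icc 0 1) := by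
    apply antitoneOn_of_deriv_nonpos (convex_Icc 0 1) hNcont.continuousOn
    · intro x _; exact (hNder x).differentiableAt.differentiableWithinAt
    · intro x hx
      rw [interior_Icc] at hx
      rw [(hNder x).deriv]
      have hfx := h x ⟨hx.1.le, hx.2.le⟩
      have hex := Real.exp_pos (-K * x)
      nlinarith [mul_nonneg hex.le (sub_nonneg.mpr hfx)]
  intro t ht
  have hN0 : N 0 = 0 := by simp [hNdef, hIdef]
  have hNt : N t ≤ 0 := by
    have h2 := hanti (Set.left_mem_Icc.2 zero_le_one) ht ht.1
    rwa [hN0] at h2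
  have hNt' : Real.exp (-K * t) * I t ≤ 0 := hNt
  have hIt : I t ≤ 0 := by nlinarith [Real.exp_pos (-K * t)]
  have := h t ht
  nlinarith

/-- Gronwall-type stability estimate on `[0,1]` for the pathwise
inert-drift system: with `c₁ = ‖W'‖_∞·‖W'''‖_∞ + ‖W''‖_∞²` and `c₂ = ‖W''‖_∞`,
`sup_{0≤r≤1} |Y¹_r − Y²_r| ≤ sup_{0≤r≤1} |X¹_r − X²_r| · (1 + (c₁+c₂|s|)·e^{c₁+c₂|s|})`.
(The supremum bound on `|X¹ − X²|` is expressed through an arbitrary upper bound `C`.) -/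
theorem stmt17 (W : ℝ → ℝ) (hWper : ∀ x, W (x + 2 * Real.pi) = W x) (hW : ContDiff ℝ 3 W)
    (y s : ℝ) (X₁ X₂ : ℝ → ℝ) (hX₁ : Measurable X₁) (hX₂ : Measurable X₂)
    (Y₁ S₁ Y₂ S₂ : ℝ → ℝ)
    (hint1 : IntervalIntegrable (fun r => deriv W (Y₁ r) * S₁ r) volume 0 1)
    (hint2 : IntervalIntegrable (fun r => deriv (deriv W) (Y₁ r)) volume 0 1)
    (hint3 : IntervalIntegrable (fun r => deriv W (Y₂ r) * S₂ r) volume 0 1)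
    (hint4 : IntervalIntegrable (fun r => deriv (deriv W) (Y₂ r)) volume 0 1)
    (hY₁ : ∀ t ∈ Set.Icc (0:ℝ) 1,
      Y₁ t = y + X₁ t + ∫ r in (0:ℝ)..t, deriv W (Y₁ r) * S₁ r)
    (hS₁ : ∀ t ∈ Set.Icc (0:ℝ) 1,
      S₁ t = s + ∫ r in (0:ℝ)..t, deriv (deriv W) (Y₁ r))
    (hY₂ : ∀ t ∈ Set.Icc (0:ℝ) 1,
      Y₂ t = y + X₂ t + ∫ r in (0:ℝ)..t, deriv W (Y₂ r) * S₂ r)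
    (hS₂ : ∀ t ∈ Set.Icc (0:ℝ) 1,
      S₂ t = s + ∫ r in (0:ℝ)..t, deriv (deriv W) (Y₂ r)) :
    ∀ C : ℝ, (∀ u ∈ Set.Icc (0:ℝ) 1, |X₁ u - X₂ u| ≤ C) →
      ∀ t ∈ Set.Icc (0:ℝ) 1,
        |Y₁ t - Y₂ t| ≤ C * (1 +
          (((⨆ z : ℝ, |deriv W z|) * (⨆ z : ℝ, |deriv (deriv (deriv W)) z|) +
              (⨆ z : ℝ, |deriv (deriv W) z|) ^ 2) +
            (⨆ z : ℝ, |deriv (deriv W) z|) * |s|) *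
          Real.exp (((⨆ z : ℝ, |deriv W z|) * (⨆ z : ℝ, |deriv (deriv (deriv W)) z|) +
              (⨆ z : ℝ, |deriv (deriv W) z|) ^ 2) +
            (⨆ z : ℝ, |deriv (deriv W) z|) * |s|)) := by
  intro C hC t ht
  have hCnn : 0 ≤ C := le_trans (abs_nonneg _) (hC 0 ⟨le_refl 0, zero_le_one⟩)
  -- smoothness
  have hW3 : ContDiff ℝ ((2:ℕ) + 1) W := by exact_mod_cast hW
  rw [contDiff_succ_iff_deriv] at hW3
  obtain ⟨hWd, -, hW'2⟩ := hW3
  have hW'3 : ContDiff ℝ ((1:ℕ) + 1) (deriv W) := by exact_mod_cast hW'2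
  rw [contDiff_succ_iff_deriv] at hW'3
  obtain ⟨hW'd, -, hW''1⟩ := hW'3
  have hW''1' : ContDiff ℝ 1 (deriv (deriv W)) := by exact_mod_cast hW''1
  rw [contDiff_one_iff_deriv] at hW''1'
  obtain ⟨hW''d, hW'''c⟩ := hW''1'
  have hW'c : Continuous (deriv W) := hW'd.continuous
  have hW''c : Continuous (deriv (deriv W)) := hW''d.continuous
  -- periodicity
  have perderiv : ∀ f : ℝ → ℝ, Function.Periodic f (2 * Real.pi) →
      Function.Periodic (deriv f) (2 * Real.pi) := by
    intro f hf x
    have hfe : (fun y => f (y + 2 * Real.pi)) = f := funext hf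
    rw [← deriv_comp_add_const f (2 * Real.pi) x, hfe]
  have hper1 : Function.Periodic (deriv W) (2 * Real.pi) := perderiv W hWper
  have hper2 : Function.Periodic (deriv (deriv W)) (2 * Real.pi) := perderiv _ hper1
  have hper3 : Function.Periodic (deriv (deriv (deriv W))) (2 * Real.pi) := perderiv _ hper2
  -- sup bounds
  set M₁ := ⨆ z : ℝ, |deriv W z| with hM₁def
  set M₂ := ⨆ z : ℝ, |deriv (deriv W) z| with hM₂def
  set M₃ := ⨆ z : ℝ, |deriv (deriv (deriv W)) z| with hM₃def
  have hbd1 : ∀ z, |deriv W z| ≤ M₁ :=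
    fun z => le_ciSup (bddAbove_abs_of_periodic hW'c hper1) z
  have hbd2 : ∀ z, |deriv (deriv W) z| ≤ M₂ :=
    fun z => le_ciSup (bddAbove_abs_of_periodic hW''c hper2) z
  have hbd3 : ∀ z, |deriv (deriv (deriv W)) z| ≤ M₃ :=
    fun z => le_ciSup (bddAbove_abs_of_periodic hW'''c hper3) z
  have hM₁0 : 0 ≤ M₁ := le_trans (abs_nonneg _) (hbd1 0)
  have hM₂0 : 0 ≤ M₂ := le_trans (abs_nonneg _) (hbd2 0)
  have hM₃0 : 0 ≤ M₃ := le_trans (abs_nonneg _) (hbd3 0)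
  set K := M₁ * M₃ + M₂ ^ 2 + M₂ * |s| with hKdef
  have hK0 : 0 ≤ K := by positivity
  -- Lipschitz estimates
  have hlip1 : ∀ a b : ℝ, |deriv W a - deriv W b| ≤ M₂ * |a - b| := by
    intro a b
    have := convex_univ.norm_image_sub_le_of_norm_deriv_le (f := deriv W)
      (fun x _ => hW'd x) (fun x _ => by rw [Real.norm_eq_abs]; exact hbd2 x)
      (Set.mem_univ b) (Set.mem_univ a)
    simpa [Real.norm_eq_abs] using this
  have hlip2 : ∀ a b : ℝ, |deriv (deriv W) a - deriv (deriv W) b| ≤ M₃ * |a - b| := by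
    intro a b
    have := convex_univ.norm_image_sub_le_of_norm_deriv_le (f := deriv (deriv W))
      (fun x _ => hW''d x) (fun x _ => by rw [Real.norm_eq_abs]; exact hbd3 x)
      (Set.mem_univ b) (Set.mem_univ a)
    simpa [Real.norm_eq_abs] using this
  -- interval inclusion helper
  have hmono : ∀ {u : ℝ}, u ∈ Set.Icc (0:ℝ) 1 →
      Set.uIcc (0:ℝ) u ⊆ Set.uIcc (0:ℝ) 1 := by
    intro u hu
    rw [Set.uIcc_of_le hu.1, Set.uIcc_of_le zero_le_one]
    exact Set.Icc_subset_Icc le_rfl hu.2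
  -- primitives
  set g₁ : ℝ → ℝ := fun r => deriv W (Y₁ r) * S₁ r with hg₁def
  set g₂ : ℝ → ℝ := fun r => deriv W (Y₂ r) * S₂ r with hg₂def
  set q₁ : ℝ → ℝ := fun r => deriv (deriv W) (Y₁ r) with hq₁def
  set q₂ : ℝ → ℝ := fun r => deriv (deriv W) (Y₂ r) with hq₂def
  set P₁ : ℝ → ℝ := fun u => ∫ r in (0:ℝ)..u, g₁ r with hP₁def
  set P₂ : ℝ → ℝ := fun u => ∫ r in (0:ℝ)..u, g₂ r with hP₂def
  have hIcc : Set.uIcc (0:ℝ) 1 = Set.Icc (0:ℝ) 1 := Set.uIcc_of_le zero_le_one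
  have hP₁cont : ContinuousOn P₁ (Set.Icc (0:ℝ) 1) := by
    rw [← hIcc]; exact intervalIntegral.continuousOn_primitive_interval' hint1 Set.left_mem_uIcc
  have hP₂cont : ContinuousOn P₂ (Set.Icc (0:ℝ) 1) := by
    rw [← hIcc]; exact intervalIntegral.continuousOn_primitive_interval' hint3 Set.left_mem_uIcc
  -- the difference function
  set D : ℝ → ℝ := fun r => X₁ r - X₂ r + (P₁ r - P₂ r) with hDdef
  have hZD : ∀ r ∈ Set.Icc (0:ℝ) 1, Y₁ r - Y₂ r = D r := by
    intro r hr
    rw [hY₁ r hr, hY₂ r hr]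
    simp only [hDdef, hP₁def, hP₂def]
    ring
  set φ : ℝ → ℝ := (Set.Icc (0:ℝ) 1).indicator (fun r => |D r|) with hφdef
  have hφ_eq : ∀ r ∈ Set.Icc (0:ℝ) 1, φ r = |Y₁ r - Y₂ r| := by
    intro r hr
    rw [hZD r hr, hφdef, Set.indicator_of_mem hr]
  have hφnn : ∀ r, 0 ≤ φ r := by
    intro r
    exact Set.indicator_nonneg (fun x _ => abs_nonneg _) r
  -- integrability of φ
  have hφint : Integrable φ volume := by
    rw [hφdef, integrable_indicator_iff measurableSet_Icc]
    obtain ⟨B₁, hB₁⟩ := (isCompact_Icc (a := (0:ℝ)) (b := 1)).exists_bound_of_continuousOn hP₁cont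
    obtain ⟨B₂, hB₂⟩ := (isCompact_Icc (a := (0:ℝ)) (b := 1)).exists_bound_of_continuousOn hP₂cont
    have haesm : AEStronglyMeasurable (fun r => |D r|) (volume.restrict (Set.Icc (0:ℝ) 1)) := by
      have hfe : (fun r => |D r|) = fun r => ‖D r‖ := by
        funext r; rw [Real.norm_eq_abs]
      rw [hfe]
      refine AEStronglyMeasurable.norm ?_
      refine AEStronglyMeasurable.add ?_ ?_
      · exact ((hX₁.sub hX₂).aestronglyMeasurable)
      · exact (hP₁cont.sub hP₂cont).aestronglyMeasurable measurableSet_Icc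
    refine Integrable.mono' (integrable_const (C + (B₁ + B₂))) haesm ?_
    refine (ae_restrict_iff' measurableSet_Icc).2 (ae_of_all _ ?_)
    intro r hr
    have h1 := hC r hr
    have h2 := hB₁ r hr
    have h3 := hB₂ r hr
    rw [Real.norm_eq_abs] at *
    rw [abs_abs]
    calc |D r| ≤ |X₁ r - X₂ r| + (|P₁ r| + |P₂ r|) := by
          refine (abs_add_le _ _).trans ?_
          exact add_le_add le_rfl (abs_sub _ _)
      _ ≤ C + (B₁ + B₂) := by
          refine add_le_add h1 (add_le_add ?_ ?_)
          · simpa [Real.norm_eq_abs] using h2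
          · simpa [Real.norm_eq_abs] using h3
  have hφii : ∀ a b : ℝ, IntervalIntegrable φ volume a b := fun a b => hφint.intervalIntegrable
  -- A, the primitive of φ
  set A : ℝ → ℝ := fun u => ∫ r in (0:ℝ)..u, φ r with hAdef
  have hAcont : Continuous A := hφint.continuous_primitive 0
  have hAnn : ∀ u : ℝ, 0 ≤ u → 0 ≤ A u := by
    intro u hu
    exact intervalIntegral.integral_nonneg hu (fun r _ => hφnn r)
  have hAmono : ∀ r u : ℝ, r ≤ u → A r ≤ A u := by
    intro r u hru
    have hadd := intervalIntegral.integral_add_adjacent_intervals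
      (hφii 0 r) (hφii r u)
    have hpos : 0 ≤ ∫ x in r..u, φ x :=
      intervalIntegral.integral_nonneg hru (fun x _ => hφnn x)
    simp only [hAdef]
    rw [← hadd]
    linarith
  -- bound on S₁
  have hS₁bd : ∀ r ∈ Set.Icc (0:ℝ) 1, |S₁ r| ≤ |s| + M₂ := by
    intro r hr
    rw [hS₁ r hr]
    refine (abs_add_le _ _).trans ?_
    refine add_le_add le_rfl ?_
    have := intervalIntegral.norm_integral_le_of_norm_le_const
      (C := M₂) (a := 0) (b := r) (f := q₁) (fun x _ => by
        simpa [Real.norm_eq_abs, hq₁def] using hbd2 (Y₁ x))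
    rw [Real.norm_eq_abs] at this
    refine this.trans ?_
    have : |r - 0| ≤ 1 := by
      rw [sub_zero, abs_of_nonneg hr.1]; exact hr.2
    nlinarith
  -- bound on S₁ - S₂
  have hSdiff : ∀ r ∈ Set.Icc (0:ℝ) 1, |S₁ r - S₂ r| ≤ M₃ * A r := by
    intro r hr
    have hq₁' : IntervalIntegrable q₁ volume 0 r := hint2.mono_set (hmono hr)
    have hq₂' : IntervalIntegrable q₂ volume 0 r := hint4.mono_set (hmono hr)
    rw [hS₁ r hr, hS₂ r hr]
    have heq : s + (∫ u in (0:ℝ)..r, q₁ u) - (s + ∫ u in (0:ℝ)..r, q₂ u)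
        = ∫ u in (0:ℝ)..r, (q₁ u - q₂ u) := by
      rw [intervalIntegral.integral_sub hq₁' hq₂']; ring
    rw [heq]
    calc |∫ u in (0:ℝ)..r, (q₁ u - q₂ u)| ≤ ∫ u in (0:ℝ)..r, |q₁ u - q₂ u| :=
          intervalIntegral.abs_integral_le_integral_abs hr.1
      _ ≤ ∫ u in (0:ℝ)..r, M₃ * φ u := by
          refine intervalIntegral.integral_mono_on hr.1 ((hq₁'.sub hq₂').abs)
            ((hφii 0 r).const_mul M₃) ?_
          intro u hu
          have hu' : u ∈ Set.Icc (0:ℝ) 1 := ⟨hu.1, hu.2.trans hr.2⟩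
          rw [hφ_eq u hu']
          simpa [hq₁def, hq₂def] using hlip2 (Y₁ u) (Y₂ u)
      _ = M₃ * A r := by
          rw [intervalIntegral.integral_const_mul]
  -- main pointwise inequality: φ u ≤ C + K * A u
  have hmain : ∀ u ∈ Set.Icc (0:ℝ) 1, φ u ≤ C + K * A u := by
    intro u hu
    have hg₁' : IntervalIntegrable g₁ volume 0 u := hint1.mono_set (hmono hu)
    have hg₂' : IntervalIntegrable g₂ volume 0 u := hint3.mono_set (hmono hu)
    have hgd : ∀ r ∈ Set.Icc (0:ℝ) u,
        |g₁ r - g₂ r| ≤ (M₂ * (|s| + M₂)) * φ r + M₁ * (M₃ * A u) := by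
      intro r hr
      have hr' : r ∈ Set.Icc (0:ℝ) 1 := ⟨hr.1, hr.2.trans hu.2⟩
      have a1 : |deriv W (Y₁ r) - deriv W (Y₂ r)| ≤ M₂ * φ r := by
        rw [hφ_eq r hr']; exact hlip1 (Y₁ r) (Y₂ r)
      have a2 : |S₁ r| ≤ |s| + M₂ := hS₁bd r hr'
      have a3 : |S₁ r - S₂ r| ≤ M₃ * A r := hSdiff r hr'
      have a4 : |deriv W (Y₂ r)| ≤ M₁ := hbd1 (Y₂ r)
      have a5 : A r ≤ A u := hAmono r u hr.2
      have a6 : 0 ≤ A r := hAnn r hr.1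
      have hsplit : g₁ r - g₂ r
          = (deriv W (Y₁ r) - deriv W (Y₂ r)) * S₁ r + deriv W (Y₂ r) * (S₁ r - S₂ r) := by
        simp only [hg₁def, hg₂def]; ring
      rw [hsplit]
      calc |(deriv W (Y₁ r) - deriv W (Y₂ r)) * S₁ r + deriv W (Y₂ r) * (S₁ r - S₂ r)|
          ≤ |deriv W (Y₁ r) - deriv W (Y₂ r)| * |S₁ r| + |deriv W (Y₂ r)| * |S₁ r - S₂ r| := by
            refine (abs_add_le _ _).trans ?_
            rw [abs_mul, abs_mul]
        _ ≤ (M₂ * φ r) * (|s| + M₂) + M₁ * (M₃ * A u) := by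
            have b1 : |deriv W (Y₁ r) - deriv W (Y₂ r)| * |S₁ r| ≤ (M₂ * φ r) * (|s| + M₂) :=
              mul_le_mul a1 a2 (abs_nonneg _) (mul_nonneg hM₂0 (hφnn r))
            have b2 : |deriv W (Y₂ r)| * |S₁ r - S₂ r| ≤ M₁ * (M₃ * A u) := by
              refine mul_le_mul a4 (a3.trans ?_) (abs_nonneg _) hM₁0
              exact mul_le_mul_of_nonneg_left a5 hM₃0
            linarith
        _ = (M₂ * (|s| + M₂)) * φ r + M₁ * (M₃ * A u) := by ring
    have habs : IntervalIntegrable (fun r => |g₁ r - g₂ r|) volume 0 u := (hg₁'.sub hg₂').abs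
    have hrhs : IntervalIntegrable (fun r => (M₂ * (|s| + M₂)) * φ r + M₁ * (M₃ * A u))
        volume 0 u := ((hφii 0 u).const_mul _).add (intervalIntegrable_const)
    have step1 : φ u ≤ C + |∫ r in (0:ℝ)..u, (g₁ r - g₂ r)| := by
      rw [hφ_eq u hu, hZD u hu]
      have : D u = (X₁ u - X₂ u) + ∫ r in (0:ℝ)..u, (g₁ r - g₂ r) := by
        rw [intervalIntegral.integral_sub hg₁' hg₂']
      rw [this]
      refine (abs_add_le _ _).trans ?_
      exact add_le_add (hC u hu) le_rfl
    have step2 : |∫ r in (0:ℝ)..u, (g₁ r - g₂ r)| ≤ (M₂ * (|s| + M₂)) * A u + M₁ * (M₃ * A u) * u := by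
      calc |∫ r in (0:ℝ)..u, (g₁ r - g₂ r)| ≤ ∫ r in (0:ℝ)..u, |g₁ r - g₂ r| :=
            intervalIntegral.abs_integral_le_integral_abs hu.1
        _ ≤ ∫ r in (0:ℝ)..u, ((M₂ * (|s| + M₂)) * φ r + M₁ * (M₃ * A u)) :=
            intervalIntegral.integral_mono_on hu.1 habs hrhs hgd
        _ = (M₂ * (|s| + M₂)) * A u + M₁ * (M₃ * A u) * u := by
            rw [intervalIntegral.integral_add ((hφii 0 u).const_mul _) intervalIntegrable_const,
              intervalIntegral.integral_const_mul, intervalIntegral.integral_const]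
            simp only [hAdef, smul_eq_mul, sub_zero]
            ring
    have hAu : 0 ≤ A u := hAnn u hu.1
    have hu1 : u ≤ 1 := hu.2
    have : M₁ * (M₃ * A u) * u ≤ M₁ * M₃ * A u := by nlinarith [mul_nonneg (mul_nonneg hM₁0 hM₃0) hAu]
    calc φ u ≤ C + |∫ r in (0:ℝ)..u, (g₁ r - g₂ r)| := step1
      _ ≤ C + ((M₂ * (|s| + M₂)) * A u + M₁ * (M₃ * A u) * u) := by linarith [step2]
      _ ≤ C + K * A u := by rw [hKdef]; nlinarith
  -- Gronwall
  have hexpc : Continuous fun r : ℝ => Real.exp (K * r) := by fun_prop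
  set f : ℝ → ℝ := fun u => K * A u - C * (Real.exp (K * u) - 1) with hfdef
  have hfcont : Continuous f :=
    (continuous_const.mul hAcont).sub (continuous_const.mul (hexpc.sub continuous_const))
  have hfle : ∀ u ∈ Set.Icc (0:ℝ) 1, f u ≤ K * ∫ r in (0:ℝ)..u, f r := by
    intro u hu
    have hAint : IntervalIntegrable A volume 0 u := (hAcont.intervalIntegrable 0 u)
    set Jv := ∫ r in (0:ℝ)..u, A r with hJvdef
    set Eu := ∫ r in (0:ℝ)..u, Real.exp (K * r) with hEudef
    have hKEu : K * Eu = Real.exp (K * u) - 1 := by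
      have hder : ∀ r ∈ Set.uIcc (0:ℝ) u,
          HasDerivAt (fun x => Real.exp (K * x)) (K * Real.exp (K * r)) r := by
        intro r _
        simpa [mul_comm] using ((hasDerivAt_id r).const_mul K).exp
      have := intervalIntegral.integral_eq_sub_of_hasDerivAt hder
        ((continuous_const.mul hexpc).intervalIntegrable 0 u)
      rw [intervalIntegral.integral_const_mul] at this
      simp only [Real.exp_zero, mul_zero] at this
      simp only [hEudef]
      exact this
    have hAu : A u ≤ ∫ r in (0:ℝ)..u, (C + K * A r) := by
      have hrhs : IntervalIntegrable (fun r => C + K * A r) volume 0 u :=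
        (continuous_const.add (continuous_const.mul hAcont)).intervalIntegrable 0 u
      refine intervalIntegral.integral_mono_on hu.1 (hφii 0 u) hrhs ?_
      intro r hr
      exact hmain r ⟨hr.1, hr.2.trans hu.2⟩
    have h2 : ∫ r in (0:ℝ)..u, (C + K * A r) = C * u + K * Jv := by
      rw [intervalIntegral.integral_add intervalIntegrable_const
        (hAint.const_mul K), intervalIntegral.integral_const,
        intervalIntegral.integral_const_mul]
      simp [hJvdef, smul_eq_mul, sub_zero, mul_comm]
    have h3 : ∫ r in (0:ℝ)..u, f r = K * Jv - C * (Eu - u) := by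
      have hexpint : IntervalIntegrable (fun r => Real.exp (K * r) - 1) volume 0 u :=
        (hexpc.sub continuous_const).intervalIntegrable 0 u
      rw [hfdef]
      rw [intervalIntegral.integral_sub (f := fun r => K * A r) (g := fun r => C * (Real.exp (K * r) - 1)) ((continuous_const.mul hAcont).intervalIntegrable 0 u)
          ((continuous_const.mul (hexpc.sub continuous_const)).intervalIntegrable 0 u),
        intervalIntegral.integral_const_mul, intervalIntegral.integral_const_mul,
        intervalIntegral.integral_sub (hexpc.intervalIntegrable 0 u) intervalIntegrable_const,
        intervalIntegral.integral_const]
      simp only [hJvdef, hEudef, smul_eq_mul, sub_zero, mul_one]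
    have h4 : K * ∫ r in (0:ℝ)..u, f r = K * K * Jv - C * (Real.exp (K * u) - 1 - K * u) := by
      rw [h3]
      linear_combination (-C) * hKEu
    have h5 : f u ≤ K * (C * u + K * Jv) - C * (Real.exp (K * u) - 1) := by
      have := mul_le_mul_of_nonneg_left (hAu.trans_eq h2) hK0
      simp only [hfdef]
      linarith
    have h6 : K * (C * u + K * Jv) - C * (Real.exp (K * u) - 1)
        = K * K * Jv - C * (Real.exp (K * u) - 1 - K * u) := by ring
    rw [h4]
    rw [h6] at h5
    exact h5
  have hft := gronwall0 hfcont hK0 hfle t ht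
  -- conclude
  have hKA : K * A t ≤ C * (Real.exp (K * t) - 1) := by
    simp only [hfdef] at hft; linarith
  have hφt := hmain t ht
  have hφt' : φ t ≤ C * Real.exp (K * t) := by linarith
  have hexp1 : Real.exp (K * t) ≤ Real.exp K := by
    apply Real.exp_le_exp.2
    nlinarith [ht.1, ht.2]
  have hfinal : C * Real.exp K ≤ C * (1 + K * Real.exp K) := by
    have h7 : Real.exp K * (-K + 1) ≤ Real.exp K * Real.exp (-K) :=
      mul_le_mul_of_nonneg_left (Real.add_one_le_exp (-K)) (Real.exp_pos K).le
    rw [← Real.exp_add] at h7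
    simp only [add_neg_cancel, Real.exp_zero] at h7
    have : Real.exp K ≤ 1 + K * Real.exp K := by nlinarith
    exact mul_le_mul_of_nonneg_left this hCnn
  rw [← hφ_eq t ht]
  calc φ t ≤ C * Real.exp (K * t) := hφt'
    _ ≤ C * Real.exp K := mul_le_mul_of_nonneg_left hexp1 hCnn
    _ ≤ C * (1 + K * Real.exp K) := hfinal
end
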